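/- Let M be a closed L-invariant set. Then: (i) S_l* K_M ⊂ K_M for all l ∈ L; (ii) H(M) is a reducing subspace for the operators (S_l)_{l∈L}, i.e., invariant under every S_l and every S_l*; (iii) if M_1 and M_2 are closed L-invariant sets with dist(M_1,M_2) > 0, then H(M_1) and H(M_2) are orthogonal subspaces of L²(μ_B). -/

import Mathlib

open MeasureTheory Complex Filter Topology

noncomputable section

def expv {d : ℕ} (t x : Fin d → ℝ) : ℂ :=
  Complex.exp (2 * Real.pi * Complex.I * (∑ i, t i * x i))

def Rmat {d : ℕ} (R : Matrix (Fin d) (Fin d) ℤ) : Matrix (Fin d) (Fin d) ℝ :=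
  R.map Int.cast

def vecR {d : ℕ} (b : Fin d → ℤ) : Fin d → ℝ := fun i => (b i : ℝ)

def tauB {d : ℕ} (R : Matrix (Fin d) (Fin d) ℤ) (b : Fin d → ℤ) (x : Fin d → ℝ) :
    Fin d → ℝ :=
  (Rmat R)⁻¹.mulVec (x + vecR b)

def tauL {d : ℕ} (R : Matrix (Fin d) (Fin d) ℤ) (l : Fin d → ℤ) (x : Fin d → ℝ) :
    Fin d → ℝ :=
  ((Rmat R).transpose)⁻¹.mulVec (x + vecR l)

/-- `σ_l(x) = Rᵀ x + l`. -/
def sigmaL {d : ℕ} (R : Matrix (Fin d) (Fin d) ℤ) (l : Fin d → ℤ) (x : Fin d → ℝ) :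
    Fin d → ℝ :=
  (Rmat R).transpose.mulVec x + vecR l

def Expansive {d : ℕ} (R : Matrix (Fin d) (Fin d) ℤ) : Prop :=
  ∀ z : ℂ, (R.map (Int.cast : ℤ → ℂ)).charpoly.IsRoot z → 1 < ‖z‖

def chiB {d : ℕ} (B : Finset (Fin d → ℤ)) (x : Fin d → ℝ) : ℂ :=
  (B.card : ℂ)⁻¹ * ∑ b ∈ B, expv (vecR b) x

def hadMat {d : ℕ} (R : Matrix (Fin d) (Fin d) ℤ) (B L : Finset (Fin d → ℤ)) :
    Matrix B L ℂ :=
  fun b l => ((Real.sqrt (B.card) : ℝ) : ℂ)⁻¹ *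
    expv ((Rmat R)⁻¹.mulVec (vecR (b : Fin d → ℤ))) (vecR (l : Fin d → ℤ))

def IsHadamardPair {d : ℕ} (R : Matrix (Fin d) (Fin d) ℤ)
    (B L : Finset (Fin d → ℤ)) : Prop :=
  (hadMat R B L).conjTranspose * hadMat R B L = 1 ∧
    hadMat R B L * (hadMat R B L).conjTranspose = 1


/-- `M` is `L`-invariant: possible transitions starting in `M` stay in `M`. -/
def LInvariant {d : ℕ} (R : Matrix (Fin d) (Fin d) ℤ) (B L : Finset (Fin d → ℤ))
    (M : Set (Fin d → ℝ)) : Prop :=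
  ∀ x ∈ M, ∀ l ∈ L, chiB B (tauL R l x) ≠ 0 → tauL R l x ∈ M

/-- Two sets are separated when they are at positive `dist'`-distance. -/
def SepSets {d : ℕ} (dist' : (Fin d → ℝ) → (Fin d → ℝ) → ℝ)
    (M₁ M₂ : Set (Fin d → ℝ)) : Prop :=
  ∃ δ > 0, ∀ x ∈ M₁, ∀ y ∈ M₂, δ ≤ dist' x y

/-- `K_M`: the closed span of `{e_{-t} : t ∈ M}`. -/
def KM {d : ℕ} {μ : MeasureTheory.Measure (Fin d → ℝ)}
    (E : (Fin d → ℝ) → MeasureTheory.Lp ℂ 2 μ) (M : Set (Fin d → ℝ)) :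
    Submodule ℂ (MeasureTheory.Lp ℂ 2 μ) :=
  (Submodule.span ℂ {g | ∃ t ∈ M, g = E (-t)}).topologicalClosure

/-- `H(M)`: the closed span of `{S_{l_1} ⋯ S_{l_n} e_{-t} : t ∈ M, l_i ∈ L, n ≥ 0}`. -/
def HM {d : ℕ} {μ : MeasureTheory.Measure (Fin d → ℝ)}
    (E : (Fin d → ℝ) → MeasureTheory.Lp ℂ 2 μ)
    (S : (Fin d → ℤ) → (MeasureTheory.Lp ℂ 2 μ →L[ℂ] MeasureTheory.Lp ℂ 2 μ))
    (L : Finset (Fin d → ℤ)) (M : Set (Fin d → ℝ)) :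
    Submodule ℂ (MeasureTheory.Lp ℂ 2 μ) :=
  (Submodule.span ℂ {g | ∃ t ∈ M, ∃ w : List (Fin d → ℤ),
    (∀ l ∈ w, l ∈ L) ∧ g = (w.map S).prod (E (-t))}).topologicalClosure

section ExpAlg
variable {d : ℕ}

lemma expv_eq (t x : Fin d → ℝ) :
    expv t x = Complex.exp (2 * Real.pi * Complex.I * ((dotProduct t x : ℝ) : ℂ)) := rfl

lemma expv_comm (t x : Fin d → ℝ) : expv t x = expv x t := by
  simp [expv, mul_comm]

lemma expv_add_left (s t x : Fin d → ℝ) : expv (s + t) x = expv s x * expv t x := by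
  rw [expv_eq, expv_eq, expv_eq, ← Complex.exp_add]
  congr 1
  rw [add_dotProduct]
  push_cast
  ring

lemma expv_add_right (t x y : Fin d → ℝ) : expv t (x + y) = expv t x * expv t y := by
  rw [expv_comm, expv_add_left, expv_comm x, expv_comm y]

lemma expv_zero_left (x : Fin d → ℝ) : expv 0 x = 1 := by
  simp [expv]

lemma expv_neg_left (t x : Fin d → ℝ) : expv (-t) x = (expv t x)⁻¹ := by
  rw [expv_eq, expv_eq, ← Complex.exp_neg]
  congr 1
  rw [neg_dotProduct]
  push_cast
  ring

lemma conj_expv (t x : Fin d → ℝ) : (starRingEnd ℂ) (expv t x) = expv (-t) x := by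
  rw [expv_neg_left, expv_eq, ← Complex.exp_conj, ← Complex.exp_neg]
  congr 1
  simp only [map_mul, Complex.conj_I, Complex.conj_ofReal, map_ofNat]
  push_cast
  ring

lemma abs_expv (t x : Fin d → ℝ) : ‖expv t x‖ = 1 := by
  rw [expv_eq, Complex.norm_exp]
  have : (2 * ↑Real.pi * Complex.I * ((dotProduct t x : ℝ) : ℂ)).re = 0 := by
    simp [Complex.mul_re, Complex.mul_im]
  rw [this, Real.exp_zero]

lemma expv_mulVec (A : Matrix (Fin d) (Fin d) ℝ) (t v : Fin d → ℝ) :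
    expv t (A.mulVec v) = expv (A.transpose.mulVec t) v := by
  rw [expv_eq, expv_eq, Matrix.dotProduct_mulVec, Matrix.mulVec_transpose]

end ExpAlg

section MatAlg
variable {d : ℕ} {R : Matrix (Fin d) (Fin d) ℤ}

lemma det_isUnit (hRexp : Expansive R) : IsUnit (Rmat R).det := by
  rw [isUnit_iff_ne_zero]
  intro h
  have hz : (R.map (Int.cast : ℤ → ℂ)).det = 0 := by
    have h1 : ((R.det : ℤ) : ℝ) = 0 := by
      rw [show ((R.det : ℤ) : ℝ) = (Int.castRingHom ℝ) R.det from rfl, RingHom.map_det]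
      exact h
    have h2 : (R.det : ℤ) = 0 := by exact_mod_cast h1
    rw [show (R.map (Int.cast : ℤ → ℂ)) = (Int.castRingHom ℂ).mapMatrix R from rfl,
      ← RingHom.map_det]
    simp [h2]
  have hroot : (R.map (Int.cast : ℤ → ℂ)).charpoly.IsRoot 0 := by
    have := Matrix.det_eq_sign_charpoly_coeff (R.map (Int.cast : ℤ → ℂ))
    rw [hz] at this
    have hcoeff : (R.map (Int.cast : ℤ → ℂ)).charpoly.coeff 0 = 0 := by
      by_contra hc
      exact hc (by
        field_simp at this
        simpa using this)
    rwa [Polynomial.IsRoot, ← Polynomial.coeff_zero_eq_eval_zero]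
  have h10 := hRexp 0 hroot
  rw [norm_zero] at h10
  linarith

lemma detT_isUnit (hRexp : Expansive R) : IsUnit ((Rmat R).transpose).det := by
  rw [Matrix.det_transpose]; exact det_isUnit hRexp

lemma mulVec_tauB (hRexp : Expansive R) (b : Fin d → ℤ) (x : Fin d → ℝ) :
    (Rmat R).mulVec (tauB R b x) = x + vecR b := by
  rw [tauB, Matrix.mulVec_mulVec, Matrix.mul_nonsing_inv _ (det_isUnit hRexp),
    Matrix.one_mulVec]

lemma mulVecT_tauL (hRexp : Expansive R) (l : Fin d → ℤ) (x : Fin d → ℝ) :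
    ((Rmat R).transpose).mulVec (tauL R l x) = x + vecR l := by
  rw [tauL, Matrix.mulVec_mulVec, Matrix.mul_nonsing_inv _ (detT_isUnit hRexp),
    Matrix.one_mulVec]

/-- The main substitution identity:  `expv s (tauB R b x) = expv s' x * expv s' (vecR b)`
where `s' = (Rᵀ)⁻¹ s`. -/
lemma expv_tauB (s : Fin d → ℝ) (b : Fin d → ℤ) (x : Fin d → ℝ) :
    expv s (tauB R b x)
      = expv (((Rmat R).transpose)⁻¹.mulVec s) x
        * expv (((Rmat R).transpose)⁻¹.mulVec s) (vecR b) := by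
  rw [tauB, expv_mulVec, Matrix.transpose_nonsing_inv, expv_add_right]

lemma tauL_eq (l : Fin d → ℤ) (x : Fin d → ℝ) :
    tauL R l x = ((Rmat R).transpose)⁻¹.mulVec x + ((Rmat R).transpose)⁻¹.mulVec (vecR l) := by
  rw [tauL, Matrix.mulVec_add]

end MatAlg

section Meas
variable {d N : ℕ} {R : Matrix (Fin d) (Fin d) ℤ} {B : Finset (Fin d → ℤ)}
  {X : Set (Fin d → ℝ)} {μ : Measure (Fin d → ℝ)}

lemma cont_mulVec (A : Matrix (Fin d) (Fin d) ℝ) : Continuous fun v => A.mulVec v :=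
  LinearMap.continuous_of_finiteDimensional (Matrix.mulVecLin A)

lemma cont_tauB (R : Matrix (Fin d) (Fin d) ℤ) (b : Fin d → ℤ) : Continuous (tauB R b) :=
  (cont_mulVec _).comp (continuous_id.add continuous_const)

lemma cont_expv (s : Fin d → ℝ) : Continuous fun x : Fin d → ℝ => expv s x := by
  apply Complex.continuous_exp.comp
  apply continuous_const.mul
  exact Complex.continuous_ofReal.comp (continuous_finset_sum _ fun i _ =>
    (continuous_const.mul (continuous_apply i)))

lemma norm_expv (s x : Fin d → ℝ) : ‖expv s x‖ = 1 := by
  rw [abs_expv]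

variable [IsProbabilityMeasure μ]

lemma map_tauB_le (hN : N ≠ 0)
    (hμinv : μ = (N : ENNReal)⁻¹ • ∑ b ∈ B, μ.map (tauB R b))
    {b : Fin d → ℤ} (hb : b ∈ B) : μ.map (tauB R b) ≤ (N : ENNReal) • μ := by
  rw [Measure.le_iff]
  intro s hs
  have h1 : ((N : ENNReal) • μ) s = (N : ENNReal) * μ s := rfl
  have h2 : μ s = (N : ENNReal)⁻¹ * ∑ b' ∈ B, (μ.map (tauB R b')) s := by
    conv_lhs => rw [hμinv]
    rw [Measure.smul_apply, Measure.finset_sum_apply]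
    rfl
  rw [h1, h2, ← mul_assoc, ENNReal.mul_inv_cancel (by exact_mod_cast hN) (by simp), one_mul]
  exact Finset.single_le_sum (f := fun b' => (μ.map (tauB R b')) s) (fun _ _ => zero_le) hb

lemma R_tauB_ae (hRexp : Expansive R) (hN : N ≠ 0)
    (hμinv : μ = (N : ENNReal)⁻¹ • ∑ b ∈ B, μ.map (tauB R b))
    (hXc : IsCompact X) (hμsupp : μ Xᶜ = 0)
    {𝓡 : (Fin d → ℝ) → (Fin d → ℝ)} (h𝓡meas : Measurable 𝓡)
    (h𝓡 : ∀ b ∈ B, ∀ᵐ x ∂(μ.restrict (tauB R b '' X)),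
      𝓡 x = (Rmat R).mulVec x - vecR b)
    {b : Fin d → ℤ} (hb : b ∈ B) :
    ∀ᵐ x ∂μ, 𝓡 (tauB R b x) = x := by
  set S : Set (Fin d → ℝ) := tauB R b '' X with hS
  have hScl : MeasurableSet S := (hXc.image (cont_tauB R b)).isClosed.measurableSet
  set Bad : Set (Fin d → ℝ) := {y | ¬ (𝓡 y = (Rmat R).mulVec y - vecR b)} with hBad
  have hBadm : MeasurableSet Bad := by
    have : MeasurableSet {y | 𝓡 y = (Rmat R).mulVec y - vecR b} :=
      measurableSet_eq_fun h𝓡meas (((cont_mulVec (Rmat R)).measurable).sub measurable_const)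
    exact this.compl
  have hnull : μ (Bad ∩ S) = 0 := by
    have := (ae_iff).mp (h𝓡 b hb)
    rwa [Measure.restrict_apply hBadm] at this
  have hsub : {x | ¬ 𝓡 (tauB R b x) = x} ⊆ (tauB R b ⁻¹' (Bad ∩ S)) ∪ Xᶜ := by
    intro x hx
    by_cases hxX : x ∈ X
    · left
      refine ⟨?_, ⟨x, hxX, rfl⟩⟩
      intro hgood
      apply hx
      rw [hgood, mulVec_tauB hRexp, add_sub_cancel_right]
    · right; exact hxX
  rw [ae_iff]
  refine measure_mono_null hsub (le_antisymm ?_ zero_le)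
  refine le_trans (measure_union_le _ _) ?_
  rw [hμsupp, add_zero]
  have h1 : μ (tauB R b ⁻¹' (Bad ∩ S)) = (μ.map (tauB R b)) (Bad ∩ S) := by
    rw [Measure.map_apply (cont_tauB R b).measurable (hBadm.inter hScl)]
  rw [h1]
  calc (μ.map (tauB R b)) (Bad ∩ S) ≤ ((N : ENNReal) • μ) (Bad ∩ S) :=
        (map_tauB_le hN hμinv hb) _
    _ = (N : ENNReal) * μ (Bad ∩ S) := rfl
    _ = 0 := by rw [hnull, mul_zero]

lemma R_measpres (hRexp : Expansive R) (hN : N ≠ 0) (hBcard : B.card = N)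
    (hμinv : μ = (N : ENNReal)⁻¹ • ∑ b ∈ B, μ.map (tauB R b))
    (hXc : IsCompact X) (hμsupp : μ Xᶜ = 0)
    {𝓡 : (Fin d → ℝ) → (Fin d → ℝ)} (h𝓡meas : Measurable 𝓡)
    (h𝓡 : ∀ b ∈ B, ∀ᵐ x ∂(μ.restrict (tauB R b '' X)),
      𝓡 x = (Rmat R).mulVec x - vecR b) :
    MeasurePreserving 𝓡 μ μ := by
  refine ⟨h𝓡meas, ?_⟩
  ext A hA
  rw [Measure.map_apply h𝓡meas hA]
  have h2 : μ (𝓡 ⁻¹' A) = (N : ENNReal)⁻¹ * ∑ b ∈ B, μ (tauB R b ⁻¹' (𝓡 ⁻¹' A)) := by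
    conv_lhs => rw [hμinv]
    rw [Measure.smul_apply, Measure.finset_sum_apply]
    congr 1
    refine Finset.sum_congr rfl fun b hb => ?_
    rw [Measure.map_apply (cont_tauB R b).measurable (h𝓡meas hA)]
  rw [h2]
  have h3 : ∀ b ∈ B, μ (tauB R b ⁻¹' (𝓡 ⁻¹' A)) = μ A := by
    intro b hb
    apply measure_congr
    rw [Filter.eventuallyEq_set]
    filter_upwards [R_tauB_ae hRexp hN hμinv hXc hμsupp h𝓡meas h𝓡 hb] with x hx
    simp [Set.mem_preimage, hx]
  rw [Finset.sum_congr rfl h3, Finset.sum_const, hBcard, nsmul_eq_mul, ← mul_assoc,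
    ENNReal.inv_mul_cancel (by exact_mod_cast hN) (by simp), one_mul]

lemma R_exists_b (hX : X = ⋃ b ∈ B, tauB R b '' X) (hXc : IsCompact X) (hμsupp : μ Xᶜ = 0)
    {𝓡 : (Fin d → ℝ) → (Fin d → ℝ)}
    (h𝓡 : ∀ b ∈ B, ∀ᵐ x ∂(μ.restrict (tauB R b '' X)),
      𝓡 x = (Rmat R).mulVec x - vecR b) :
    ∀ᵐ x ∂μ, ∃ b ∈ B, 𝓡 x = (Rmat R).mulVec x - vecR b := by
  have hball : ∀ᵐ x ∂μ, ∀ b ∈ (↑B : Set (Fin d → ℤ)), x ∈ tauB R b '' X → 𝓡 x = (Rmat R).mulVec x - vecR b := by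
    rw [ae_ball_iff B.countable_toSet]
    intro b hb
    rw [Finset.mem_coe] at hb
    have hScl : MeasurableSet (tauB R b '' X) := (hXc.image (cont_tauB R b)).isClosed.measurableSet
    exact (ae_restrict_iff' hScl).mp (h𝓡 b hb)
  have hXae : ∀ᵐ x ∂μ, x ∈ X := by
    rw [ae_iff]
    have : {x | ¬ x ∈ X} = Xᶜ := rfl
    rw [this, hμsupp]
  filter_upwards [hball, hXae] with x hx hxX
  rw [hX] at hxX
  simp only [Set.mem_iUnion] at hxX
  obtain ⟨b, hb, hxb⟩ := hxX
  exact ⟨b, hb, hx b hb hxb⟩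

end Meas

section Key
variable {d N : ℕ} {R : Matrix (Fin d) (Fin d) ℤ} {B : Finset (Fin d → ℤ)}
  {X : Set (Fin d → ℝ)} {μ : Measure (Fin d → ℝ)} [IsProbabilityMeasure μ]
  {𝓡 : (Fin d → ℝ) → (Fin d → ℝ)}

lemma key_integral (hRexp : Expansive R) (hN : N ≠ 0) (hBcard : B.card = N)
    (hμinv : μ = (N : ENNReal)⁻¹ • ∑ b ∈ B, μ.map (tauB R b))
    (hXc : IsCompact X) (hμsupp : μ Xᶜ = 0)
    (h𝓡meas : Measurable 𝓡)
    (h𝓡 : ∀ b ∈ B, ∀ᵐ x ∂(μ.restrict (tauB R b '' X)),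
      𝓡 x = (Rmat R).mulVec x - vecR b)
    (s : Fin d → ℝ) {H : (Fin d → ℝ) → ℂ} (hH : Integrable H μ) :
    ∫ x, expv s x * H (𝓡 x) ∂μ
      = ((N : ℂ)⁻¹ * ∑ b ∈ B, expv (((Rmat R).transpose)⁻¹.mulVec s) (vecR b))
        * ∫ x, expv (((Rmat R).transpose)⁻¹.mulVec s) x * H x ∂μ := by
  set s' := ((Rmat R).transpose)⁻¹.mulVec s with hs'
  set G : (Fin d → ℝ) → ℂ := fun x => expv s x * H (𝓡 x) with hG
  have hMP : MeasurePreserving 𝓡 μ μ :=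
    R_measpres hRexp hN hBcard hμinv hXc hμsupp h𝓡meas h𝓡
  have hHR : Integrable (H ∘ 𝓡) μ :=
    (hMP.integrable_comp hH.aestronglyMeasurable).mpr hH
  have hGint : Integrable G μ :=
    hHR.bdd_mul (c := 1) ((cont_expv s).aestronglyMeasurable) (ae_of_all _ fun x => le_of_eq (norm_expv s x))
  have hGb : ∀ b ∈ B, Integrable G (μ.map (tauB R b)) := fun b hb =>
    (hGint.smul_measure (by simp : (N : ENNReal) ≠ ⊤)).mono_measure (map_tauB_le hN hμinv hb)
  have step1 : ∫ x, G x ∂μ = (N : ℝ)⁻¹ • ∑ b ∈ B, ∫ x, G (tauB R b x) ∂μ := by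
    conv_lhs => rw [hμinv]
    rw [integral_smul_measure, integral_finset_sum_measure hGb]
    congr 1
    · simp
    · refine Finset.sum_congr rfl fun b hb => ?_
      exact integral_map (cont_tauB R b).measurable.aemeasurable (hGb b hb).aestronglyMeasurable
  have step2 : ∀ b ∈ B, ∫ x, G (tauB R b x) ∂μ
      = expv s' (vecR b) * ∫ x, expv s' x * H x ∂μ := by
    intro b hb
    have hcongr : (fun x => G (tauB R b x))
        =ᵐ[μ] fun x => expv s' (vecR b) * (expv s' x * H x) := by
      filter_upwards [R_tauB_ae hRexp hN hμinv hXc hμsupp h𝓡meas h𝓡 hb] with x hx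
      rw [hG]
      simp only
      rw [hx, expv_tauB, ← hs']
      ring
    rw [integral_congr_ae hcongr, integral_const_mul]
  rw [show (∫ x, expv s x * H (𝓡 x) ∂μ) = ∫ x, G x ∂μ from rfl, step1,
    Finset.sum_congr rfl step2, ← Finset.sum_mul, Complex.real_smul]
  push_cast
  ring

end Key

section Had
variable {d N : ℕ} {R : Matrix (Fin d) (Fin d) ℤ} {B L : Finset (Fin d → ℤ)}

lemma expv_neg_right (t x : Fin d → ℝ) : expv t (-x) = expv (-t) x := by
  rw [expv_comm, expv_neg_left, expv_comm, expv_neg_left]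

lemma invT_T (R : Matrix (Fin d) (Fin d) ℤ) :
    (((Rmat R).transpose)⁻¹).transpose = (Rmat R)⁻¹ := by
  rw [← Matrix.transpose_nonsing_inv, Matrix.transpose_transpose]

lemma expv_tauLvec (s : Fin d → ℝ) (v : Fin d → ℝ) :
    expv (((Rmat R).transpose)⁻¹.mulVec s) v = expv ((Rmat R)⁻¹.mulVec v) s := by
  rw [expv_comm, expv_mulVec, invT_T]

lemma sq_coef (hN : N ≠ 0) (hBcard : B.card = N) :
    (((Real.sqrt (B.card) : ℝ) : ℂ))⁻¹ * (((Real.sqrt (B.card) : ℝ) : ℂ))⁻¹ = (N : ℂ)⁻¹ := by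
  rw [← mul_inv, ← Complex.ofReal_mul, Real.mul_self_sqrt (by positivity), hBcard]
  norm_num

lemma had_col (hHad : IsHadamardPair R B L) (hN : N ≠ 0) (hBcard : B.card = N)
    {l l' : Fin d → ℤ} (hl : l ∈ L) (hl' : l' ∈ L) (hne : l ≠ l') :
    ∑ b ∈ B, expv (((Rmat R).transpose)⁻¹.mulVec (vecR l' - vecR l)) (vecR b) = 0 := by
  have h := hHad.1
  rw [← Matrix.ext_iff] at h
  have h0 := h ⟨l, hl⟩ ⟨l', hl'⟩
  rw [Matrix.mul_apply, Matrix.one_apply_ne (by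
    intro hc; exact hne (congrArg Subtype.val hc))] at h0
  have h1 : ∑ b : {x // x ∈ B}, (hadMat R B L).conjTranspose ⟨l, hl⟩ b * hadMat R B L b ⟨l', hl'⟩
      = (N : ℂ)⁻¹ * ∑ b ∈ B,
        expv (((Rmat R).transpose)⁻¹.mulVec (vecR l' - vecR l)) (vecR b) := by
    rw [Finset.mul_sum, ← Finset.sum_coe_sort B]
    refine Finset.sum_congr rfl fun b _ => ?_
    rw [Matrix.conjTranspose_apply, hadMat, hadMat]
    simp only [RCLike.star_def]
    rw [map_mul, map_inv₀, Complex.conj_ofReal, conj_expv]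
    rw [expv_tauLvec, show vecR l' - vecR l = vecR l' + -(vecR l) from sub_eq_add_neg _ _,
      expv_add_right, expv_neg_right]
    rw [← sq_coef hN hBcard (N := N)]
    ring
  rw [h0] at h1
  have hcoef : (N : ℂ)⁻¹ ≠ 0 := by simp [hN]
  exact (mul_eq_zero.mp h1.symm).resolve_left hcoef

lemma had_row (hHad : IsHadamardPair R B L) (hN : N ≠ 0) (hBcard : B.card = N)
    {b b' : Fin d → ℤ} (hb : b ∈ B) (hb' : b' ∈ B) (hne : b ≠ b') :
    ∑ l ∈ L, expv ((Rmat R)⁻¹.mulVec (vecR b - vecR b')) (vecR l) = 0 := by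
  have h := hHad.2
  rw [← Matrix.ext_iff] at h
  have h0 := h ⟨b, hb⟩ ⟨b', hb'⟩
  rw [Matrix.mul_apply, Matrix.one_apply_ne (by
    intro hc; exact hne (congrArg Subtype.val hc))] at h0
  have h1 : ∑ l : {x // x ∈ L}, hadMat R B L ⟨b, hb⟩ l * (hadMat R B L).conjTranspose l ⟨b', hb'⟩
      = (N : ℂ)⁻¹ * ∑ l ∈ L, expv ((Rmat R)⁻¹.mulVec (vecR b - vecR b')) (vecR l) := by
    rw [Finset.mul_sum, ← Finset.sum_coe_sort L]
    refine Finset.sum_congr rfl fun l _ => ?_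
    rw [Matrix.conjTranspose_apply, hadMat, hadMat]
    simp only [RCLike.star_def]
    rw [map_mul, map_inv₀, Complex.conj_ofReal, conj_expv]
    rw [show vecR b - vecR b' = vecR b + -(vecR b') from sub_eq_add_neg _ _,
      Matrix.mulVec_add, expv_add_left, Matrix.mulVec_neg]
    rw [← sq_coef hN hBcard (N := N)]
    ring
  rw [h0] at h1
  have hcoef : (N : ℂ)⁻¹ ≠ 0 := by simp [hN]
  exact (mul_eq_zero.mp h1.symm).resolve_left hcoef

end Had

section KeySum
variable {d N : ℕ} {R : Matrix (Fin d) (Fin d) ℤ} {B L : Finset (Fin d → ℤ)}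

set_option maxHeartbeats 1000000 in
lemma key_sum (hHad : IsHadamardPair R B L) (hN : N ≠ 0) (hBcard : B.card = N)
    (hLcard : L.card = N) {b : Fin d → ℤ} (hb : b ∈ B) (t : Fin d → ℝ) :
    ∑ l ∈ L, chiB B (tauL R l t) * expv (-(tauL R l t)) (vecR b) = 1 := by
  have hterm : ∀ l ∈ L, chiB B (tauL R l t) * expv (-(tauL R l t)) (vecR b)
      = (N : ℂ)⁻¹ * ∑ b' ∈ B, expv ((Rmat R)⁻¹.mulVec (vecR b' - vecR b)) t
          * expv ((Rmat R)⁻¹.mulVec (vecR b' - vecR b)) (vecR l) := by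
    intro l hl
    rw [chiB, hBcard, mul_assoc, Finset.sum_mul]
    congr 1
    refine Finset.sum_congr rfl fun b' _ => ?_
    rw [← expv_neg_right, expv_comm (vecR b'), ← expv_add_right,
      show vecR b' + -(vecR b) = vecR b' - vecR b from (sub_eq_add_neg _ _).symm]
    rw [tauL, expv_tauLvec, expv_add_right]
  have hsingle : ∑ b' ∈ B, expv ((Rmat R)⁻¹.mulVec (vecR b' - vecR b)) t
      * ∑ l ∈ L, expv ((Rmat R)⁻¹.mulVec (vecR b' - vecR b)) (vecR l) = (N : ℂ) := by
    rw [Finset.sum_eq_single_of_mem b hb]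
    · simp only [sub_self, Matrix.mulVec_zero, expv_zero_left, one_mul]
      rw [Finset.sum_const, hLcard]
      simp
    · intro b' hb' hne
      rw [had_row hHad hN hBcard hb' hb hne, mul_zero]
  calc ∑ l ∈ L, chiB B (tauL R l t) * expv (-(tauL R l t)) (vecR b)
      = ∑ l ∈ L, (N : ℂ)⁻¹ * ∑ b' ∈ B, expv ((Rmat R)⁻¹.mulVec (vecR b' - vecR b)) t
          * expv ((Rmat R)⁻¹.mulVec (vecR b' - vecR b)) (vecR l) :=
        Finset.sum_congr rfl hterm
    _ = (N : ℂ)⁻¹ * ∑ l ∈ L, ∑ b' ∈ B, expv ((Rmat R)⁻¹.mulVec (vecR b' - vecR b)) t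
          * expv ((Rmat R)⁻¹.mulVec (vecR b' - vecR b)) (vecR l) :=
        (Finset.mul_sum _ _ _).symm
    _ = (N : ℂ)⁻¹ * ∑ b' ∈ B, ∑ l ∈ L, expv ((Rmat R)⁻¹.mulVec (vecR b' - vecR b)) t
          * expv ((Rmat R)⁻¹.mulVec (vecR b' - vecR b)) (vecR l) := by rw [Finset.sum_comm]
    _ = (N : ℂ)⁻¹ * ∑ b' ∈ B, expv ((Rmat R)⁻¹.mulVec (vecR b' - vecR b)) t
          * ∑ l ∈ L, expv ((Rmat R)⁻¹.mulVec (vecR b' - vecR b)) (vecR l) := by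
        rw [Finset.sum_congr rfl (fun b' _ => (Finset.mul_sum _ _ _).symm)]
    _ = (N : ℂ)⁻¹ * (N : ℂ) := by rw [hsingle]
    _ = 1 := inv_mul_cancel₀ (by exact_mod_cast hN)

end KeySum

section Scalar
variable {d N : ℕ} {R : Matrix (Fin d) (Fin d) ℤ} {B L : Finset (Fin d → ℤ)}

lemma scalar_refine (hRexp : Expansive R) (hHad : IsHadamardPair R B L) (hN : N ≠ 0)
    (hBcard : B.card = N) (hLcard : L.card = N) {b : Fin d → ℤ} (hb : b ∈ B)
    (t x : Fin d → ℝ) :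
    ∑ l ∈ L, chiB B (tauL R l t) *
        (starRingEnd ℂ) (expv (vecR l) x * expv (-(tauL R l t)) ((Rmat R).mulVec x - vecR b))
      = expv t x := by
  have hterm : ∀ l ∈ L, chiB B (tauL R l t) *
      (starRingEnd ℂ) (expv (vecR l) x * expv (-(tauL R l t)) ((Rmat R).mulVec x - vecR b))
      = expv t x * (chiB B (tauL R l t) * expv (-(tauL R l t)) (vecR b)) := by
    intro l hl
    have e1 : (starRingEnd ℂ) (expv (vecR l) x * expv (-(tauL R l t)) ((Rmat R).mulVec x - vecR b))
        = expv (-(vecR l)) x * (expv (t + vecR l) x * expv (-(tauL R l t)) (vecR b)) := by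
      rw [map_mul, conj_expv, conj_expv, neg_neg,
        show (Rmat R).mulVec x - vecR b = (Rmat R).mulVec x + -(vecR b) from sub_eq_add_neg _ _,
        expv_add_right, expv_mulVec, mulVecT_tauL hRexp, expv_neg_right]
    have hc : expv (-(vecR l)) x * expv (vecR l) x = 1 := by
      rw [expv_neg_left]
      exact inv_mul_cancel₀ (by rw [expv_eq]; exact Complex.exp_ne_zero _)
    rw [e1, expv_add_left]
    calc chiB B (tauL R l t) * (expv (-(vecR l)) x *
            (expv t x * expv (vecR l) x * expv (-(tauL R l t)) (vecR b)))
        = (expv (-(vecR l)) x * expv (vecR l) x) *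
            (expv t x * (chiB B (tauL R l t) * expv (-(tauL R l t)) (vecR b))) := by ring
      _ = expv t x * (chiB B (tauL R l t) * expv (-(tauL R l t)) (vecR b)) := by
          rw [hc, one_mul]
  rw [Finset.sum_congr rfl hterm, ← Finset.mul_sum, key_sum hHad hN hBcard hLcard hb t, mul_one]

end Scalar

section Op
variable {d N : ℕ} {R : Matrix (Fin d) (Fin d) ℤ} {B L : Finset (Fin d → ℤ)}
  {X : Set (Fin d → ℝ)} {μ : Measure (Fin d → ℝ)} [IsProbabilityMeasure μ]
  {𝓡 : (Fin d → ℝ) → (Fin d → ℝ)}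
  {S : (Fin d → ℤ) → (Lp ℂ 2 μ →L[ℂ] Lp ℂ 2 μ)}
  {E : (Fin d → ℝ) → Lp ℂ 2 μ}

variable (hRexp : Expansive R) (hN : N ≠ 0) (hBcard : B.card = N)
  (hμinv : μ = (N : ENNReal)⁻¹ • ∑ b ∈ B, μ.map (tauB R b))
  (hXc : IsCompact X) (hμsupp : μ Xᶜ = 0)
  (hX : X = ⋃ b ∈ B, tauB R b '' X)
  (h𝓡meas : Measurable 𝓡)
  (h𝓡 : ∀ b ∈ B, ∀ᵐ x ∂(μ.restrict (tauB R b '' X)),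
    𝓡 x = (Rmat R).mulVec x - vecR b)
  (hS : ∀ l ∈ L, ∀ f : Lp ℂ 2 μ,
    (S l f : (Fin d → ℝ) → ℂ) =ᵐ[μ] fun x => expv (vecR l) x * f (𝓡 x))
  (hE : ∀ t : Fin d → ℝ, (E t : (Fin d → ℝ) → ℂ) =ᵐ[μ] fun x => expv t x)
  (hHad : IsHadamardPair R B L) (hLcard : L.card = N)

include hE in
lemma inner_E (t : Fin d → ℝ) (g : Lp ℂ 2 μ) :
    (inner ℂ (E (-t)) g : ℂ) = ∫ x, expv t x * (g : (Fin d → ℝ) → ℂ) x ∂μ := by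
  rw [L2.inner_def]
  apply integral_congr_ae
  filter_upwards [hE (-t)] with x hx
  rw [RCLike.inner_apply', hx, conj_expv, neg_neg]

include hRexp hN hBcard hμinv hXc hμsupp h𝓡meas h𝓡 hS hE in
set_option maxHeartbeats 2000000 in
lemma inner_E_S {l : Fin d → ℤ} (hl : l ∈ L) (t : Fin d → ℝ) (v : Lp ℂ 2 μ) :
    (inner ℂ (E (-t)) (S l v) : ℂ)
      = chiB B (tauL R l t) * (inner ℂ (E (-(tauL R l t))) v : ℂ) := by
  rw [inner_E hE, inner_E hE]
  have h1 : (fun x => expv t x * (S l v : (Fin d → ℝ) → ℂ) x)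
      =ᵐ[μ] fun x => expv (t + vecR l) x * (v : (Fin d → ℝ) → ℂ) (𝓡 x) := by
    filter_upwards [hS l hl v] with x hx
    rw [hx, expv_add_left]
    ring
  rw [integral_congr_ae h1,
    key_integral hRexp hN hBcard hμinv hXc hμsupp h𝓡meas h𝓡 _
      ((Lp.memLp v).integrable one_le_two)]
  congr 1
  rw [chiB, hBcard]
  congr 1
  exact Finset.sum_congr rfl fun b _ => expv_comm _ _

include hRexp hN hBcard hμinv hXc hμsupp h𝓡meas h𝓡 hS hE in
lemma adj_formula {l : Fin d → ℤ} (hl : l ∈ L) (t : Fin d → ℝ) :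
    ContinuousLinearMap.adjoint (S l) (E (-t))
      = (starRingEnd ℂ) (chiB B (tauL R l t)) • E (-(tauL R l t)) := by
  apply ext_inner_right ℂ
  intro v
  rw [ContinuousLinearMap.adjoint_inner_left, inner_smul_left, RCLike.conj_conj]
  exact inner_E_S hRexp hN hBcard hμinv hXc hμsupp h𝓡meas h𝓡 hS hE hl t v


include hRexp hN hBcard hμinv hXc hμsupp h𝓡meas h𝓡 hS hHad in
set_option maxHeartbeats 2000000 in
lemma cuntz {l l' : Fin d → ℤ} (hl : l ∈ L) (hl' : l' ∈ L) (f g : Lp ℂ 2 μ) :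
    (inner ℂ (S l f) (S l' g) : ℂ) = if l = l' then (inner ℂ f g : ℂ) else 0 := by
  have hH : Integrable (fun y => (starRingEnd ℂ) ((f : (Fin d → ℝ) → ℂ) y)
      * (g : (Fin d → ℝ) → ℂ) y) μ := by
    have := L2.integrable_inner (𝕜 := ℂ) f g
    simpa only [RCLike.inner_apply'] using this
  have ha : (fun x => (inner ℂ (((S l f : Lp ℂ 2 μ) : (Fin d → ℝ) → ℂ) x)
        (((S l' g : Lp ℂ 2 μ) : (Fin d → ℝ) → ℂ) x) : ℂ))
      =ᵐ[μ] fun x => expv (vecR l' - vecR l) x *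
        ((starRingEnd ℂ) ((f : (Fin d → ℝ) → ℂ) (𝓡 x)) * (g : (Fin d → ℝ) → ℂ) (𝓡 x)) := by
    filter_upwards [hS l hl f, hS l' hl' g] with x h1 h2
    rw [RCLike.inner_apply', h1, h2, map_mul, conj_expv,
      show vecR l' - vecR l = vecR l' + -(vecR l) from sub_eq_add_neg _ _, expv_add_left]
    ring
  rw [L2.inner_def, integral_congr_ae ha,
    key_integral hRexp hN hBcard hμinv hXc hμsupp h𝓡meas h𝓡 _ hH]
  by_cases hll : l = l'
  · subst hll
    rw [if_pos rfl]
    simp only [sub_self, Matrix.mulVec_zero, expv_zero_left, one_mul]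
    rw [Finset.sum_const, hBcard, nsmul_eq_mul, mul_one,
      inv_mul_cancel₀ (by exact_mod_cast hN : (N : ℂ) ≠ 0), one_mul]
    rw [L2.inner_def]
    apply integral_congr_ae
    filter_upwards with x
    rw [RCLike.inner_apply']
  · rw [if_neg hll, had_col hHad hN hBcard hl hl' hll, mul_zero, zero_mul]

include hRexp hN hBcard hμinv hXc hμsupp hX h𝓡meas h𝓡 hS hE hHad hLcard in
set_option maxHeartbeats 2000000 in
lemma refine_inner (t : Fin d → ℝ) (g : Lp ℂ 2 μ) :
    (inner ℂ (E (-t)) g : ℂ)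
      = ∑ l ∈ L, chiB B (tauL R l t) * (inner ℂ (S l (E (-(tauL R l t)))) g : ℂ) := by
  have hQMP := (R_measpres hRexp hN hBcard hμinv hXc hμsupp h𝓡meas h𝓡).quasiMeasurePreserving
  have hgint : Integrable (fun x => (g : (Fin d → ℝ) → ℂ) x) μ :=
    (Lp.memLp g).integrable one_le_two
  have hterm : ∀ l ∈ L, (inner ℂ (S l (E (-(tauL R l t)))) g : ℂ)
      = ∫ x, (starRingEnd ℂ) (expv (vecR l) x * expv (-(tauL R l t)) (𝓡 x))
          * (g : (Fin d → ℝ) → ℂ) x ∂μ := by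
    intro l hl
    rw [L2.inner_def]
    apply integral_congr_ae
    have hcomp := hQMP.ae_eq_comp (hE (-(tauL R l t)))
    filter_upwards [hS l hl (E (-(tauL R l t))), hcomp] with x hx1 hx2
    rw [RCLike.inner_apply', hx1]
    have hx2' : ((E (-(tauL R l t)) : Lp ℂ 2 μ) : (Fin d → ℝ) → ℂ) (𝓡 x)
        = expv (-(tauL R l t)) (𝓡 x) := hx2
    rw [hx2']
  have hint : ∀ l ∈ L, Integrable (fun x => chiB B (tauL R l t) *
      ((starRingEnd ℂ) (expv (vecR l) x * expv (-(tauL R l t)) (𝓡 x))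
        * (g : (Fin d → ℝ) → ℂ) x)) μ := by
    intro l hl
    apply Integrable.const_mul
    apply hgint.bdd_mul (c := 1)
    · exact (Complex.continuous_conj.measurable.comp
        (((cont_expv (vecR l)).measurable).mul
          ((cont_expv _).measurable.comp h𝓡meas))).aestronglyMeasurable
    · refine ae_of_all _ fun x => le_of_eq ?_
      rw [RCLike.norm_conj, norm_mul, norm_expv, norm_expv, one_mul]
  calc (inner ℂ (E (-t)) g : ℂ) = ∫ x, expv t x * (g : (Fin d → ℝ) → ℂ) x ∂μ := inner_E hE t g
    _ = ∫ x, ∑ l ∈ L, chiB B (tauL R l t) *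
          ((starRingEnd ℂ) (expv (vecR l) x * expv (-(tauL R l t)) (𝓡 x))
            * (g : (Fin d → ℝ) → ℂ) x) ∂μ := by
        apply integral_congr_ae
        filter_upwards [R_exists_b hX hXc hμsupp h𝓡] with x hx
        obtain ⟨b, hb, hxb⟩ := hx
        rw [Finset.sum_congr rfl (fun l (_ : l ∈ L) => (mul_assoc (chiB B (tauL R l t)) _ _).symm),
          ← Finset.sum_mul, hxb, scalar_refine hRexp hHad hN hBcard hLcard hb t x]
    _ = ∑ l ∈ L, ∫ x, chiB B (tauL R l t) *
          ((starRingEnd ℂ) (expv (vecR l) x * expv (-(tauL R l t)) (𝓡 x))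
            * (g : (Fin d → ℝ) → ℂ) x) ∂μ := integral_finset_sum L hint
    _ = ∑ l ∈ L, chiB B (tauL R l t) * (inner ℂ (S l (E (-(tauL R l t)))) g : ℂ) := by
        refine Finset.sum_congr rfl fun l hl => ?_
        rw [integral_const_mul, hterm l hl]


include hRexp hN hBcard hμinv hXc hμsupp h𝓡meas h𝓡 hS hHad in
lemma adj_S_S {l l' : Fin d → ℤ} (hl : l ∈ L) (hl' : l' ∈ L) (g : Lp ℂ 2 μ) :
    ContinuousLinearMap.adjoint (S l) (S l' g) = if l = l' then g else 0 := by
  apply ext_inner_right ℂ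
  intro v
  rw [ContinuousLinearMap.adjoint_inner_left,
    cuntz hRexp hN hBcard hμinv hXc hμsupp h𝓡meas h𝓡 hS hHad hl' hl g v]
  by_cases h : l = l'
  · subst h; simp
  · rw [if_neg (fun hc => h hc.symm), if_neg h, inner_zero_left]

include hRexp hN hBcard hμinv hXc hμsupp h𝓡meas h𝓡 hS hHad in
lemma peel : ∀ (w w' : List (Fin d → ℤ)), w.length = w'.length →
    (∀ l ∈ w, l ∈ L) → (∀ l ∈ w', l ∈ L) → ∀ f g : Lp ℂ 2 μ,
    (inner ℂ ((w.map S).prod f) ((w'.map S).prod g) : ℂ)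
      = if w = w' then (inner ℂ f g : ℂ) else 0 := by
  intro w
  induction w with
  | nil =>
    intro w' hlen _ _ f g
    cases w' with
    | nil => simp
    | cons l' w'' => simp at hlen
  | cons l w ih =>
    intro w' hlen hw hw' f g
    cases w' with
    | nil => simp at hlen
    | cons l' w'' =>
      simp only [List.map_cons, List.prod_cons, ContinuousLinearMap.mul_apply]
      rw [cuntz hRexp hN hBcard hμinv hXc hμsupp h𝓡meas h𝓡 hS hHad
        (hw l (List.mem_cons_self)) (hw' l' (List.mem_cons_self))]
      by_cases hll : l = l'
      · subst hll
        rw [if_pos rfl, ih w'' (by simpa using hlen)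
          (fun a ha => hw a (List.mem_cons_of_mem _ ha))
          (fun a ha => hw' a (List.mem_cons_of_mem _ ha))]
        by_cases hww : w = w'' <;> simp [hww]
      · rw [if_neg hll, if_neg (by simp [hll])]

include hRexp hN hBcard hμinv hXc hμsupp hX h𝓡meas h𝓡 hS hE hHad hLcard in
lemma word_refine (w : List (Fin d → ℤ)) (t : Fin d → ℝ) (g : Lp ℂ 2 μ) :
    (inner ℂ ((w.map S).prod (E (-t))) g : ℂ)
      = ∑ l ∈ L, chiB B (tauL R l t) *
          (inner ℂ (((w ++ [l]).map S).prod (E (-(tauL R l t)))) g : ℂ) := by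
  have h1 : (inner ℂ ((w.map S).prod (E (-t))) g : ℂ)
      = (inner ℂ (E (-t)) (ContinuousLinearMap.adjoint ((w.map S).prod) g) : ℂ) :=
    (ContinuousLinearMap.adjoint_inner_right _ _ _).symm
  rw [h1, refine_inner hRexp hN hBcard hμinv hXc hμsupp hX h𝓡meas h𝓡 hS hE hHad hLcard]
  refine Finset.sum_congr rfl fun l hl => ?_
  congr 1
  rw [ContinuousLinearMap.adjoint_inner_right]
  congr 1
  rw [List.map_append, List.prod_append, List.map_singleton, List.prod_singleton,
    ContinuousLinearMap.mul_apply]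

include hRexp hN hBcard hμinv hXc hμsupp hX h𝓡meas h𝓡 hS hE hHad hLcard in
lemma EE_orth {M₁ M₂ : Set (Fin d → ℝ)}
    (hM₁ : LInvariant R B L M₁) (hM₂ : LInvariant R B L M₂)
    {dist' : (Fin d → ℝ) → (Fin d → ℝ) → ℝ}
    (hcontr : ∃ c, 0 ≤ c ∧ c < 1 ∧ ∀ l ∈ L, ∀ x y,
      dist' (tauL R l x) (tauL R l y) ≤ c * dist' x y)
    (hsep : SepSets dist' M₁ M₂) :
    ∀ t ∈ M₁, ∀ t' ∈ M₂, (inner ℂ (E (-t)) (E (-t')) : ℂ) = 0 := by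
  obtain ⟨δ, hδ, hsepd⟩ := hsep
  obtain ⟨c, hc0, hc1, hcon⟩ := hcontr
  have main : ∀ n : ℕ, ∀ t ∈ M₁, ∀ t' ∈ M₂, c ^ n * dist' t t' < δ →
      (inner ℂ (E (-t)) (E (-t')) : ℂ) = 0 := by
    intro n
    induction n with
    | zero =>
      intro t ht t' ht' hlt
      exfalso
      rw [pow_zero, one_mul] at hlt
      exact absurd (hsepd t ht t' ht') (not_le.mpr hlt)
    | succ n ih =>
      intro t ht t' ht' hlt
      rw [refine_inner hRexp hN hBcard hμinv hXc hμsupp hX h𝓡meas h𝓡 hS hE hHad hLcard t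
        (E (-t'))]
      refine Finset.sum_eq_zero fun l hl => ?_
      by_cases h1 : chiB B (tauL R l t) = 0
      · rw [h1, zero_mul]
      have h2 : (inner ℂ (S l (E (-(tauL R l t)))) (E (-t')) : ℂ)
          = (starRingEnd ℂ) (inner ℂ (E (-t')) (S l (E (-(tauL R l t)))) : ℂ) :=
        (inner_conj_symm _ _).symm
      rw [h2, refine_inner hRexp hN hBcard hμinv hXc hμsupp hX h𝓡meas h𝓡 hS hE hHad hLcard t'
        (S l (E (-(tauL R l t))))]
      have hsum : ∑ l' ∈ L, chiB B (tauL R l' t') *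
          (inner ℂ (S l' (E (-(tauL R l' t')))) (S l (E (-(tauL R l t)))) : ℂ) = 0 := by
        refine Finset.sum_eq_zero fun l' hl' => ?_
        rw [cuntz hRexp hN hBcard hμinv hXc hμsupp h𝓡meas h𝓡 hS hHad hl' hl]
        by_cases h4 : l' = l
        · subst h4
          rw [if_pos rfl]
          by_cases h5 : chiB B (tauL R l' t') = 0
          · rw [h5, zero_mul]
          have hm1 : tauL R l' t ∈ M₁ := hM₁ t ht l' hl' h1
          have hm2 : tauL R l' t' ∈ M₂ := hM₂ t' ht' l' hl' h5
          have hstep : c ^ n * dist' (tauL R l' t) (tauL R l' t') < δ :=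
            calc c ^ n * dist' (tauL R l' t) (tauL R l' t')
                ≤ c ^ n * (c * dist' t t') :=
                  mul_le_mul_of_nonneg_left (hcon l' hl' t t') (pow_nonneg hc0 n)
              _ = c ^ (n + 1) * dist' t t' := by ring
              _ < δ := hlt
          have h6 := ih (tauL R l' t) hm1 (tauL R l' t') hm2 hstep
          rw [← inner_conj_symm, h6, map_zero, mul_zero]
        · rw [if_neg h4, mul_zero]
      rw [hsum, map_zero, mul_zero]
  intro t ht t' ht'
  have hdpos : 0 < dist' t t' := lt_of_lt_of_le hδ (hsepd t ht t' ht')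
  obtain ⟨n, hn⟩ := exists_pow_lt_of_lt_one (div_pos hδ hdpos) hc1
  exact main n t ht t' ht' ((lt_div_iff₀ hdpos).mp hn)

include hRexp hN hBcard hμinv hXc hμsupp hX h𝓡meas h𝓡 hS hE hHad hLcard in
lemma gen_orth {M₁ M₂ : Set (Fin d → ℝ)}
    (hM₁ : LInvariant R B L M₁) (hM₂ : LInvariant R B L M₂)
    {dist' : (Fin d → ℝ) → (Fin d → ℝ) → ℝ}
    (hcontr : ∃ c, 0 ≤ c ∧ c < 1 ∧ ∀ l ∈ L, ∀ x y,
      dist' (tauL R l x) (tauL R l y) ≤ c * dist' x y)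
    (hsep : SepSets dist' M₁ M₂) :
    ∀ (n : ℕ) (w w' : List (Fin d → ℤ)), (∀ l ∈ w, l ∈ L) → (∀ l ∈ w', l ∈ L) →
      w'.length = w.length + n → ∀ t ∈ M₁, ∀ t' ∈ M₂,
      (inner ℂ ((w.map S).prod (E (-t))) ((w'.map S).prod (E (-t'))) : ℂ) = 0 := by
  intro n
  induction n with
  | zero =>
    intro w w' hw hw' hlen t ht t' ht'
    rw [peel hRexp hN hBcard hμinv hXc hμsupp h𝓡meas h𝓡 hS hHad w w'
      (by omega) hw hw']
    by_cases hww : w = w'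
    · rw [if_pos hww]
      exact EE_orth hRexp hN hBcard hμinv hXc hμsupp hX h𝓡meas h𝓡 hS hE hHad hLcard
        hM₁ hM₂ hcontr hsep t ht t' ht'
    · rw [if_neg hww]
  | succ n ih =>
    intro w w' hw hw' hlen t ht t' ht'
    rw [word_refine hRexp hN hBcard hμinv hXc hμsupp hX h𝓡meas h𝓡 hS hE hHad hLcard w t]
    refine Finset.sum_eq_zero fun l hl => ?_
    by_cases h1 : chiB B (tauL R l t) = 0
    · rw [h1, zero_mul]
    have hm1 : tauL R l t ∈ M₁ := hM₁ t ht l hl h1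
    rw [ih (w ++ [l]) w' (fun a ha => by
        rcases List.mem_append.mp ha with h | h
        · exact hw a h
        · rw [List.mem_singleton.mp h]; exact hl) hw'
      (by simp at hlen ⊢; omega) (tauL R l t) hm1 t' ht', mul_zero]

include hRexp hN hBcard hμinv hXc hμsupp hX h𝓡meas h𝓡 hS hE hHad hLcard in
lemma gen_orth_full {M₁ M₂ : Set (Fin d → ℝ)}
    (hM₁ : LInvariant R B L M₁) (hM₂ : LInvariant R B L M₂)
    {dist' : (Fin d → ℝ) → (Fin d → ℝ) → ℝ}
    (hdsymm : ∀ x y, dist' x y = dist' y x)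
    (hcontr : ∃ c, 0 ≤ c ∧ c < 1 ∧ ∀ l ∈ L, ∀ x y,
      dist' (tauL R l x) (tauL R l y) ≤ c * dist' x y)
    (hsep : SepSets dist' M₁ M₂)
    (w w' : List (Fin d → ℤ)) (hw : ∀ l ∈ w, l ∈ L) (hw' : ∀ l ∈ w', l ∈ L)
    {t t' : Fin d → ℝ} (ht : t ∈ M₁) (ht' : t' ∈ M₂) :
    (inner ℂ ((w.map S).prod (E (-t))) ((w'.map S).prod (E (-t'))) : ℂ) = 0 := by
  rcases le_total w.length w'.length with h | h
  · exact gen_orth hRexp hN hBcard hμinv hXc hμsupp hX h𝓡meas h𝓡 hS hE hHad hLcard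
      hM₁ hM₂ hcontr hsep (w'.length - w.length) w w' hw hw' (by omega) t ht t' ht'
  · have hsep' : SepSets dist' M₂ M₁ := by
      obtain ⟨δ, hδ, hs⟩ := hsep
      exact ⟨δ, hδ, fun y hy x hx => by rw [hdsymm]; exact hs x hx y hy⟩
    rw [← inner_conj_symm,
      gen_orth hRexp hN hBcard hμinv hXc hμsupp hX h𝓡meas h𝓡 hS hE hHad hLcard
        hM₂ hM₁ hcontr hsep' (w.length - w'.length) w' w hw' hw (by omega) t' ht' t ht,
      map_zero]

end Op

theorem stmt15
    (d N : ℕ) (R : Matrix (Fin d) (Fin d) ℤ) (hRexp : Expansive R)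
    (B : Finset (Fin d → ℤ)) (hB0 : (0 : Fin d → ℤ) ∈ B) (hBcard : B.card = N)
    (X : Set (Fin d → ℝ)) (hXc : IsCompact X) (hXne : X.Nonempty)
    (hX : X = ⋃ b ∈ B, tauB R b '' X)
    (μ : Measure (Fin d → ℝ)) [IsProbabilityMeasure μ]
    (hμinv : μ = (N : ENNReal)⁻¹ • ∑ b ∈ B, μ.map (tauB R b))
    (hμsupp : μ Xᶜ = 0)
    (hnooverlap : ∀ b ∈ B, ∀ b' ∈ B, b ≠ b' →
      μ (tauB R b '' X ∩ tauB R b' '' X) = 0)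
    (𝓡 : (Fin d → ℝ) → (Fin d → ℝ)) (h𝓡meas : Measurable 𝓡)
    (h𝓡 : ∀ b ∈ B, ∀ᵐ x ∂(μ.restrict (tauB R b '' X)),
      𝓡 x = (Rmat R).mulVec x - vecR b)
    (L : Finset (Fin d → ℤ)) (hL0 : (0 : Fin d → ℤ) ∈ L) (hLcard : L.card = N)
    (hHad : IsHadamardPair R B L)
    (S : (Fin d → ℤ) → (Lp ℂ 2 μ →L[ℂ] Lp ℂ 2 μ))
    (hS : ∀ l ∈ L, ∀ f : Lp ℂ 2 μ,
      (S l f : (Fin d → ℝ) → ℂ) =ᵐ[μ] fun x => expv (vecR l) x * f (𝓡 x))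
    (E : (Fin d → ℝ) → Lp ℂ 2 μ)
    (hE : ∀ t : Fin d → ℝ, (E t : (Fin d → ℝ) → ℂ) =ᵐ[μ] fun x => expv t x)
    (dist' : (Fin d → ℝ) → (Fin d → ℝ) → ℝ)
    (hd0 : ∀ x y, dist' x y = 0 ↔ x = y)
    (hdsymm : ∀ x y, dist' x y = dist' y x)
    (hdtri : ∀ x y z, dist' x z ≤ dist' x y + dist' y z)
    (hdtop : ∀ s : Set (Fin d → ℝ),
      IsOpen s ↔ ∀ x ∈ s, ∃ ε > 0, ∀ y, dist' x y < ε → y ∈ s)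
    (hcontr : ∃ c, 0 ≤ c ∧ c < 1 ∧ ∀ l ∈ L, ∀ x y,
      dist' (tauL R l x) (tauL R l y) ≤ c * dist' x y)
    (M : Set (Fin d → ℝ)) (hMcl : IsClosed M) (hMinv : LInvariant R B L M) :
    -- (i)
    (∀ l ∈ L, ∀ x ∈ KM E M, ContinuousLinearMap.adjoint (S l) x ∈ KM E M) ∧
    -- (ii)
    (∀ l ∈ L, ∀ x ∈ HM E S L M,
      S l x ∈ HM E S L M ∧ ContinuousLinearMap.adjoint (S l) x ∈ HM E S L M) ∧
    -- (iii)
    (∀ M₁ M₂ : Set (Fin d → ℝ), IsClosed M₁ → IsClosed M₂ →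
      LInvariant R B L M₁ → LInvariant R B L M₂ → SepSets dist' M₁ M₂ →
      ∀ f ∈ HM E S L M₁, ∀ g ∈ HM E S L M₂, (inner ℂ f g : ℂ) = 0) := by
  have hN : N ≠ 0 := by rw [← hBcard]; exact Finset.card_ne_zero_of_mem hB0
  have hgen : ∀ (M' : Set (Fin d → ℝ)), ∀ t ∈ M', ∀ w : List (Fin d → ℤ),
      (∀ a ∈ w, a ∈ L) → (w.map S).prod (E (-t)) ∈ HM E S L M' := fun M' t ht w hw =>
    Submodule.le_topologicalClosure _ (Submodule.subset_span ⟨t, ht, w, hw, rfl⟩)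
  refine ⟨?_, ?_, ?_⟩
  · -- (i)
    intro l hl x hx
    suffices hsuf : KM E M ≤ Submodule.comap
        (ContinuousLinearMap.adjoint (S l)).toLinearMap (KM E M) from hsuf hx
    apply Submodule.topologicalClosure_minimal
    · rw [Submodule.span_le]
      rintro g ⟨t, ht, rfl⟩
      simp only [SetLike.mem_coe, Submodule.mem_comap, ContinuousLinearMap.coe_coe]
      rw [adj_formula hRexp hN hBcard hμinv hXc hμsupp h𝓡meas h𝓡 hS hE hl t]
      by_cases hz : chiB B (tauL R l t) = 0
      · rw [hz, map_zero, zero_smul]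
        exact Submodule.zero_mem _
      · exact Submodule.smul_mem _ _ (Submodule.le_topologicalClosure _
          (Submodule.subset_span ⟨tauL R l t, hMinv t ht l hl hz, rfl⟩))
    · exact (Submodule.isClosed_topologicalClosure _).preimage
        (ContinuousLinearMap.adjoint (S l)).continuous
  · -- (ii)
    intro l hl x hx
    constructor
    · suffices hsuf : HM E S L M ≤ Submodule.comap
          (S l).toLinearMap (HM E S L M) from hsuf hx
      apply Submodule.topologicalClosure_minimal
      · rw [Submodule.span_le]
        rintro g ⟨t, ht, w, hw, rfl⟩
        simp only [SetLike.mem_coe, Submodule.mem_comap, ContinuousLinearMap.coe_coe]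
        have heq : S l ((w.map S).prod (E (-t))) = ((l :: w).map S).prod (E (-t)) := by
          rw [List.map_cons, List.prod_cons, ContinuousLinearMap.mul_apply]
        rw [heq]
        refine hgen M t ht (l :: w) fun a ha => ?_
        rcases List.mem_cons.mp ha with h | h
        · rw [h]; exact hl
        · exact hw a h
      · exact (Submodule.isClosed_topologicalClosure _).preimage (S l).continuous
    · suffices hsuf : HM E S L M ≤ Submodule.comap
          (ContinuousLinearMap.adjoint (S l)).toLinearMap (HM E S L M) from hsuf hx
      apply Submodule.topologicalClosure_minimal
      · rw [Submodule.span_le]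
        rintro g ⟨t, ht, w, hw, rfl⟩
        simp only [SetLike.mem_coe, Submodule.mem_comap, ContinuousLinearMap.coe_coe]
        cases w with
        | nil =>
          simp only [List.map_nil, List.prod_nil, ContinuousLinearMap.one_apply]
          rw [adj_formula hRexp hN hBcard hμinv hXc hμsupp h𝓡meas h𝓡 hS hE hl t]
          by_cases hz : chiB B (tauL R l t) = 0
          · rw [hz, map_zero, zero_smul]
            exact Submodule.zero_mem _
          · refine Submodule.smul_mem _ _ ?_
            have := hgen M (tauL R l t) (hMinv t ht l hl hz) [] (by simp)
            simpa using this
        | cons l' w₁ =>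
          rw [List.map_cons, List.prod_cons, ContinuousLinearMap.mul_apply,
            adj_S_S hRexp hN hBcard hμinv hXc hμsupp h𝓡meas h𝓡 hS hHad hl
              (hw l' (List.mem_cons_self)) ((w₁.map S).prod (E (-t)))]
          by_cases hll : l = l'
          · rw [if_pos hll]
            exact hgen M t ht w₁ fun a ha => hw a (List.mem_cons_of_mem _ ha)
          · rw [if_neg hll]
            exact Submodule.zero_mem _
      · exact (Submodule.isClosed_topologicalClosure _).preimage
          (ContinuousLinearMap.adjoint (S l)).continuous
  · -- (iii)
    intro M₁ M₂ _ _ hM₁inv hM₂inv hsep f hf g hg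
    have step1 : ∀ (t' : Fin d → ℝ), t' ∈ M₂ → ∀ (w' : List (Fin d → ℤ)),
        (∀ a ∈ w', a ∈ L) → ∀ f' ∈ HM E S L M₁,
        (inner ℂ ((w'.map S).prod (E (-t'))) f' : ℂ) = 0 := by
      intro t' ht' w' hw' f' hf'
      suffices hsuf : HM E S L M₁ ≤
          LinearMap.ker (innerSL ℂ ((w'.map S).prod (E (-t')))) by
        have := hsuf hf'
        rw [← innerSL_apply_apply ℂ]
        exact this
      apply Submodule.topologicalClosure_minimal
      · rw [Submodule.span_le]
        rintro h ⟨t, ht, w, hw, rfl⟩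
        simp only [SetLike.mem_coe, LinearMap.mem_ker, ContinuousLinearMap.coe_coe, innerSL_apply_apply]
        rw [← inner_conj_symm,
          gen_orth_full hRexp hN hBcard hμinv hXc hμsupp hX h𝓡meas h𝓡 hS hE hHad hLcard
            hM₁inv hM₂inv hdsymm hcontr hsep w w' hw hw' ht ht', map_zero]
      · exact ContinuousLinearMap.isClosed_ker _
    suffices hsuf2 : HM E S L M₂ ≤ LinearMap.ker (innerSL ℂ f) by
      have := hsuf2 hg
      rw [← innerSL_apply_apply ℂ]
      exact this
    apply Submodule.topologicalClosure_minimal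
    · rw [Submodule.span_le]
      rintro g₂ ⟨t', ht', w', hw', rfl⟩
      simp only [SetLike.mem_coe, LinearMap.mem_ker, ContinuousLinearMap.coe_coe, innerSL_apply_apply]
      rw [← inner_conj_symm, step1 t' ht' w' hw' f hf, map_zero]
    · exact ContinuousLinearMap.isClosed_ker _
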